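/- Let B ∈ K[X]^{k×m} with row degrees d_1,…,d_k summing to ξ, let d ≥ 0 be a target degree, and for each i let α_i = 1 + ⌊d_i/(d+1)⌋. Define the expanded matrix B̃ with Σ_i α_i rows of degree at most d by writing row i of B as B_i = B̃_{(i,0)} + X^{d+1}·B̃_{(i,1)} + ⋯ + X^{(α_i−1)(d+1)}·B̃_{(i,α_i−1)} with deg B̃_{(i,j)} ≤ d. Then B̃ has at most k + ξ/(d+1) rows, and for any A ∈ K[X]^{m×n}, row i of the product B·A is recovered as Σ_{j=0}^{α_i−1} X^{j(d+1)} · (row (i,j) of B̃·A). -/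

import Mathlib

open Polynomial Matrix

/-- The partial linearization of `B` in degree `d`: row `i` of `B` is sliced into
`α i` chunks of degree at most `d`, chunk `(i,j)` collecting the coefficients of
degrees `j(d+1), …, j(d+1)+d`. -/
noncomputable def partialLin {K : Type*} [Field K] {k m : ℕ} (d : ℕ) (α : Fin k → ℕ)
    (B : Matrix (Fin k) (Fin m) (Polynomial K)) :
    Matrix ((i : Fin k) × Fin (α i)) (Fin m) (Polynomial K) :=
  fun x c => ∑ t ∈ Finset.range (d + 1),
    Polynomial.C ((B x.1 c).coeff (x.2 * (d + 1) + t)) * Polynomial.X ^ t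

private lemma sum_range_mul_eq {M : Type*} [AddCommMonoid M] (f : ℕ → M) (N e : ℕ) :
    ∑ s ∈ Finset.range (N * e), f s
      = ∑ j ∈ Finset.range N, ∑ t ∈ Finset.range e, f (j * e + t) := by
  induction N with
  | zero => simp
  | succ N ih =>
      rw [Nat.succ_mul, Finset.sum_range_add, ih, Finset.sum_range_succ]

private lemma slice_poly {K : Type*} [Field K] (p : Polynomial K) (d N : ℕ)
    (hp : p.natDegree < N * (d + 1)) :
    p = ∑ j ∈ Finset.range N, Polynomial.X ^ (j * (d + 1)) *
        ∑ t ∈ Finset.range (d + 1),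
          Polynomial.C (p.coeff (j * (d + 1) + t)) * Polynomial.X ^ t := by
  conv_lhs => rw [p.as_sum_range' (N * (d + 1)) hp]
  rw [sum_range_mul_eq (fun s => Polynomial.monomial s (p.coeff s)) N (d + 1)]
  refine Finset.sum_congr rfl fun j _ => ?_
  rw [Finset.mul_sum]
  refine Finset.sum_congr rfl fun t _ => ?_
  rw [← Polynomial.C_mul_X_pow_eq_monomial, pow_add]
  ring

/-- partial linearization. With `B` of row degrees `d_i` summing to `ξ`,
target degree `d`, and `α_i = 1 + ⌊d_i/(d+1)⌋`, the expanded matrix `B̃` has entries of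
degree at most `d`, satisfies the slicing identity
`B_i = Σ_j X^{j(d+1)} B̃_{(i,j)}`, has at most `k + ξ/(d+1)` rows, and for any `A` the
product `B·A` is recovered from `B̃·A` by partial compression. -/
theorem partial_linearization_spec
    {K : Type*} [Field K] {k m : ℕ} (d : ℕ)
    (B : Matrix (Fin k) (Fin m) (Polynomial K))
    (dd : Fin k → ℕ)
    (hdd : ∀ i, (Finset.univ.sup fun j => (B i j).degree) = ((dd i : ℕ) : WithBot ℕ))
    (ξ : ℕ) (hξ : ξ = ∑ i, dd i)
    (α : Fin k → ℕ) (hα : ∀ i, α i = 1 + dd i / (d + 1)) :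
    (∀ (x : (i : Fin k) × Fin (α i)) (c : Fin m),
        (partialLin d α B x c).degree ≤ (d : WithBot ℕ))
    ∧ (∀ (i : Fin k) (c : Fin m),
        B i c = ∑ j : Fin (α i),
          Polynomial.X ^ ((j : ℕ) * (d + 1)) * partialLin d α B ⟨i, j⟩ c)
    ∧ (Fintype.card ((i : Fin k) × Fin (α i)) ≤ k + ξ / (d + 1))
    ∧ (∀ {n : ℕ} (A : Matrix (Fin m) (Fin n) (Polynomial K)) (i : Fin k) (c : Fin n),
        (B * A) i c = ∑ j : Fin (α i),
          Polynomial.X ^ ((j : ℕ) * (d + 1)) * (partialLin d α B * A) ⟨i, j⟩ c) := by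
  -- degree bound on entries of B
  have hBdeg : ∀ (i : Fin k) (c : Fin m), (B i c).natDegree < α i * (d + 1) := by
    intro i c
    have h1 : (B i c).degree ≤ ((dd i : ℕ) : WithBot ℕ) := by
      rw [← hdd i]; exact Finset.le_sup (f := fun j => (B i j).degree) (Finset.mem_univ c)
    have h2 : (B i c).natDegree ≤ dd i := Polynomial.natDegree_le_iff_degree_le.2 h1
    have h3 := Nat.div_add_mod (dd i) (d + 1)
    have h4 : dd i % (d + 1) < d + 1 := Nat.mod_lt _ (Nat.succ_pos d)
    have h5 := hα i
    nlinarith [Nat.zero_le (dd i / (d + 1))]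
  have slice : ∀ (i : Fin k) (c : Fin m),
      B i c = ∑ j : Fin (α i),
        Polynomial.X ^ ((j : ℕ) * (d + 1)) * partialLin d α B ⟨i, j⟩ c := by
    intro i c
    have := slice_poly (B i c) d (α i) (hBdeg i c)
    rw [Finset.sum_range fun j =>
      Polynomial.X ^ (j * (d + 1)) * ∑ t ∈ Finset.range (d + 1),
        Polynomial.C ((B i c).coeff (j * (d + 1) + t)) * Polynomial.X ^ t] at this
    exact this
  refine ⟨?_, slice, ?_, ?_⟩
  · intro x c
    refine (Polynomial.degree_sum_le _ _).trans ?_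
    refine Finset.sup_le fun t ht => ?_
    refine (Polynomial.degree_C_mul_X_pow_le t _).trans ?_
    exact_mod_cast Nat.le_of_lt_succ (Finset.mem_range.1 ht)
  · rw [Fintype.card_sigma]
    simp only [Fintype.card_fin, hα]
    rw [Finset.sum_add_distrib, Finset.sum_const, smul_eq_mul, mul_one,
      Finset.card_univ, Fintype.card_fin]
    refine Nat.add_le_add_left ?_ k
    rw [Nat.le_div_iff_mul_le (Nat.succ_pos d), Finset.sum_mul, hξ]
    exact Finset.sum_le_sum fun i _ => Nat.div_mul_le_self _ _
  · intro n A i c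
    simp only [Matrix.mul_apply]
    calc ∑ r, B i r * A r c
        = ∑ r, (∑ j : Fin (α i),
            Polynomial.X ^ ((j : ℕ) * (d + 1)) * partialLin d α B ⟨i, j⟩ r) * A r c := by
          refine Finset.sum_congr rfl fun r _ => ?_; rw [← slice i r]
      _ = ∑ j : Fin (α i), Polynomial.X ^ ((j : ℕ) * (d + 1)) *
            ∑ r, partialLin d α B ⟨i, j⟩ r * A r c := by
          simp_rw [Finset.sum_mul]
          rw [Finset.sum_comm]
          refine Finset.sum_congr rfl fun j _ => ?_
          rw [Finset.mul_sum]
          refine Finset.sum_congr rfl fun r _ => ?_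
          ring
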